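/- arXiv:0805.1964 — 2 statements merged into one kernel-verified Lean document; each statement's English description precedes it below -/
import Mathlib

section
/- The counting sequence s_n(132) satisfies the Catalan recurrence: s_{n+1}(132) = Σ_{k=0}^{n} s_k(132)·s_{n−k}(132), with s_0(132) = 1. -/
open Equiv

/-- The word `w` contains the pattern `p`: some subsequence of `w` is
order-isomorphic to `p`. -/
def Contains {α β : Type*} [LT α] [LT β] {n k : ℕ} (w : Fin n → α) (p : Fin k → β) : Prop :=
  ∃ f : Fin k → Fin n, StrictMono f ∧ ∀ i j : Fin k, p i < p j ↔ w (f i) < w (f j)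

/-- The pattern 132 (written with 0-indexed values as (0,2,1)). -/
def pat132 : Fin 3 → ℕ := ![0, 2, 1]

/-- `w` avoids the pattern 132. -/
def Avoids132 {n : ℕ} (w : Equiv.Perm (Fin n)) : Prop :=
  ¬ Contains (fun i => w i) pat132

/-- Pattern containment between permutations. -/
def ContainsP {n k : ℕ} (w : Equiv.Perm (Fin n)) (p : Equiv.Perm (Fin k)) : Prop :=
  Contains (fun i => w i) (fun i => p i)

/-- `w` is (up-down) alternating: `w 0 < w 1 > w 2 < w 3 > ⋯` (0-indexed). -/
def Alternating {m : ℕ} (w : Equiv.Perm (Fin m)) : Prop :=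
  ∀ i : ℕ, ∀ h : i + 1 < m,
    (i % 2 = 0 → w ⟨i, by omega⟩ < w ⟨i + 1, h⟩) ∧
    (i % 2 = 1 → w ⟨i + 1, h⟩ < w ⟨i, by omega⟩)

/-- The even-indexed (in 1-indexed terms: `w₂, w₄, …, w₂ₙ`) entries of `w`
are order-isomorphic to `u`. -/
def OrderIsoEven {n : ℕ} (w : Equiv.Perm (Fin (2 * n + 1))) (u : Equiv.Perm (Fin n)) : Prop :=
  ∀ i j : Fin n, u i < u j ↔
    w ⟨2 * (i : ℕ) + 1, by have := i.isLt; omega⟩ < w ⟨2 * (j : ℕ) + 1, by have := j.isLt; omega⟩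

lemma contains132_iff {m : ℕ} (w : Perm (Fin m)) :
    Contains (fun i => w i) pat132 ↔
      ∃ a b c : Fin m, a < b ∧ b < c ∧ w a < w c ∧ w c < w b := by
  constructor
  · rintro ⟨f, hf, hp⟩
    refine ⟨f 0, f 1, f 2, hf (by decide), hf (by decide), ?_, ?_⟩
    · exact (hp 0 2).mp (by decide)
    · exact (hp 2 1).mp (by decide)
  · rintro ⟨a, b, c, hab, hbc, h1, h2⟩
    refine ⟨fun t : Fin 3 => if (t:ℕ) = 0 then a else if (t:ℕ) = 1 then b else c, ?_, ?_⟩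
    · rw [Fin.strictMono_iff_lt_succ]
      intro i
      fin_cases i
      · exact hab
      · exact hbc
    · intro i j
      fin_cases i <;> fin_cases j <;>
        first
          | exact iff_of_false (by decide) (lt_irrefl _)
          | exact iff_of_true (by decide) h1
          | exact iff_of_true (by decide) h2
          | exact iff_of_true (by decide) (h1.trans h2)
          | exact iff_of_false (by decide) (asymm h1)
          | exact iff_of_false (by decide) (asymm h2)
          | exact iff_of_false (by decide) (asymm (h1.trans h2))

section Glue
variable {n : ℕ}

def glueFun (k : ℕ) (hk : k ≤ n) (u : Perm (Fin k)) (v : Perm (Fin (n - k)))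
    (i : Fin (n + 1)) : Fin (n + 1) :=
  if h : (i : ℕ) < k then ⟨(n - k) + (u ⟨i, h⟩ : ℕ), by have := (u ⟨i, h⟩).isLt; omega⟩
  else if h2 : (i : ℕ) = k then ⟨n, by omega⟩
  else ⟨(v ⟨(i : ℕ) - k - 1, by have := i.isLt; omega⟩ : ℕ), by have := (v ⟨(i : ℕ) - k - 1, by have := i.isLt; omega⟩).isLt; omega⟩

lemma glueFun_left (k : ℕ) (hk : k ≤ n) (u : Perm (Fin k)) (v : Perm (Fin (n - k)))
    (i : Fin (n + 1)) (h : (i : ℕ) < k) :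
    glueFun k hk u v i = ⟨(n - k) + (u ⟨i, h⟩ : ℕ), by have := (u ⟨i, h⟩).isLt; omega⟩ := by
  simp [glueFun, h]

lemma glueFun_mid (k : ℕ) (hk : k ≤ n) (u : Perm (Fin k)) (v : Perm (Fin (n - k)))
    (i : Fin (n + 1)) (h : (i : ℕ) = k) :
    glueFun k hk u v i = ⟨n, by omega⟩ := by
  simp [glueFun, h]

lemma glueFun_right (k : ℕ) (hk : k ≤ n) (u : Perm (Fin k)) (v : Perm (Fin (n - k)))
    (i : Fin (n + 1)) (h : k < (i : ℕ)) :
    glueFun k hk u v i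
      = ⟨(v ⟨(i : ℕ) - k - 1, by have := i.isLt; omega⟩ : ℕ),
          by have := (v ⟨(i : ℕ) - k - 1, by have := i.isLt; omega⟩).isLt; omega⟩ := by
  have h1 : ¬ (i : ℕ) < k := by omega
  have h2 : ¬ (i : ℕ) = k := by omega
  simp [glueFun, h1, h2]

lemma glueFun_inj (k : ℕ) (hk : k ≤ n) (u : Perm (Fin k)) (v : Perm (Fin (n - k))) :
    Function.Injective (glueFun k hk u v) := by
  intro i j hij
  rcases lt_trichotomy (i : ℕ) k with hi | hi | hi <;>
    rcases lt_trichotomy (j : ℕ) k with hj | hj | hj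
  · rw [glueFun_left k hk u v i hi, glueFun_left k hk u v j hj] at hij
    have : u ⟨i, hi⟩ = u ⟨j, hj⟩ := by
      have := congrArg Fin.val hij
      simp at this
      exact Fin.ext (by omega)
    have h3 := congrArg Fin.val (u.injective this)
    simp at h3
    exact Fin.ext h3
  · rw [glueFun_left k hk u v i hi, glueFun_mid k hk u v j hj] at hij
    have := congrArg Fin.val hij
    have := (u ⟨i, hi⟩).isLt
    simp at *; omega
  · rw [glueFun_left k hk u v i hi, glueFun_right k hk u v j hj] at hij
    have := congrArg Fin.val hij
    have := (v ⟨(j : ℕ) - k - 1, by have := j.isLt; omega⟩).isLt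
    simp at *; omega
  · rw [glueFun_mid k hk u v i hi, glueFun_left k hk u v j hj] at hij
    have := congrArg Fin.val hij
    have := (u ⟨j, hj⟩).isLt
    simp at *; omega
  · exact Fin.ext (hi.trans hj.symm)
  · rw [glueFun_mid k hk u v i hi, glueFun_right k hk u v j hj] at hij
    have := congrArg Fin.val hij
    have := (v ⟨(j : ℕ) - k - 1, by have := j.isLt; omega⟩).isLt
    simp at *; omega
  · rw [glueFun_right k hk u v i hi, glueFun_left k hk u v j hj] at hij
    have := congrArg Fin.val hij
    have := (v ⟨(i : ℕ) - k - 1, by have := i.isLt; omega⟩).isLt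
    simp at *; omega
  · rw [glueFun_right k hk u v i hi, glueFun_mid k hk u v j hj] at hij
    have := congrArg Fin.val hij
    have := (v ⟨(i : ℕ) - k - 1, by have := i.isLt; omega⟩).isLt
    simp at *; omega
  · rw [glueFun_right k hk u v i hi, glueFun_right k hk u v j hj] at hij
    have hv : v ⟨(i : ℕ) - k - 1, by have := i.isLt; omega⟩
        = v ⟨(j : ℕ) - k - 1, by have := j.isLt; omega⟩ := by
      have := congrArg Fin.val hij
      simp at this
      exact Fin.ext this
    have := congrArg Fin.val (v.injective hv)
    simp at this
    exact Fin.ext (by omega)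

noncomputable def glue (k : ℕ) (hk : k ≤ n) (u : Perm (Fin k)) (v : Perm (Fin (n - k))) :
    Perm (Fin (n + 1)) :=
  Equiv.ofBijective _ (Finite.injective_iff_bijective.mp (glueFun_inj k hk u v))

lemma glue_apply (k : ℕ) (hk : k ≤ n) (u : Perm (Fin k)) (v : Perm (Fin (n - k)))
    (i : Fin (n + 1)) : glue k hk u v i = glueFun k hk u v i := rfl

end Glue

section GlueAvoids
variable {n : ℕ}

lemma glue_avoids (k : ℕ) (hk : k ≤ n) (u : Perm (Fin k)) (v : Perm (Fin (n - k)))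
    (hu : Avoids132 u) (hv : Avoids132 v) : Avoids132 (glue k hk u v) := by
  intro hc
  rw [contains132_iff] at hc
  obtain ⟨a, b, c, hab, hbc, h1, h2⟩ := hc
  set g := glue k hk u v with hg
  have vL : ∀ (i : Fin (n + 1)) (h : (i : ℕ) < k),
      (g i : ℕ) = (n - k) + (u ⟨i, h⟩ : ℕ) := by
    intro i h; rw [hg, glue_apply, glueFun_left k hk u v i h]
  have vM : ∀ (i : Fin (n + 1)), (i : ℕ) = k → (g i : ℕ) = n := by
    intro i h; rw [hg, glue_apply, glueFun_mid k hk u v i h]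
  have vR : ∀ (i : Fin (n + 1)) (h : k < (i : ℕ)),
      (g i : ℕ) = (v ⟨(i : ℕ) - k - 1, by have := i.isLt; omega⟩ : ℕ) := by
    intro i h; rw [hg, glue_apply, glueFun_right k hk u v i h]
  have bL : ∀ (i : Fin (n + 1)) (h : (i : ℕ) < k),
      n - k ≤ (g i : ℕ) ∧ (g i : ℕ) < n := by
    intro i h; rw [vL i h]; have := (u ⟨i, h⟩).isLt; omega
  have bR : ∀ (i : Fin (n + 1)) (h : k < (i : ℕ)), (g i : ℕ) < n - k := by
    intro i h; rw [vR i h]; exact (v _).isLt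
  have hab' : (a : ℕ) < b := hab
  have hbc' : (b : ℕ) < c := hbc
  have h1' : (g a : ℕ) < (g c : ℕ) := h1
  have h2' : (g c : ℕ) < (g b : ℕ) := h2
  rcases lt_trichotomy (b : ℕ) k with hb | hb | hb
  · -- b left, so a left.  c : left / mid / right
    have ha : (a : ℕ) < k := by omega
    rcases lt_trichotomy (c : ℕ) k with hcc | hcc | hcc
    · -- all left : contradiction with hu
      apply hu
      rw [contains132_iff]
      refine ⟨⟨a, ha⟩, ⟨b, hb⟩, ⟨c, hcc⟩, ?_, ?_, ?_, ?_⟩ <;>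
        rw [Fin.lt_def]
      · exact hab'
      · exact hbc'
      · have e1 := vL a ha; have e2 := vL c hcc; omega
      · have e1 := vL c hcc; have e2 := vL b hb; omega
    · -- c mid : g c = n but g c < g b ≤ n
      have e1 := vM c hcc
      have e2 := (g b).isLt
      omega
    · -- c right : g a ≥ n-k > g c
      have e1 := bL a ha
      have e2 := bR c hcc
      omega
  · -- b mid : a left, c right. g a ≥ n-k > g c contradicts g a < g c
    have ha : (a : ℕ) < k := by omega
    have hcc : k < (c : ℕ) := by omega
    have e1 := bL a ha
    have e2 := bR c hcc
    omega
  · -- b right, so c right.  a : left / mid / right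
    have hcc : k < (c : ℕ) := by omega
    rcases lt_trichotomy (a : ℕ) k with ha | ha | ha
    · have e1 := bL a ha
      have e2 := bR c hcc
      omega
    · -- a mid : g a = n, but g a < g c ≤ n
      have e1 := vM a ha
      have e2 := (g c).isLt
      omega
    · -- all right : contradiction with hv
      apply hv
      rw [contains132_iff]
      have hia := a.isLt; have hib := b.isLt; have hic := c.isLt
      refine ⟨⟨(a : ℕ) - k - 1, by omega⟩, ⟨(b : ℕ) - k - 1, by omega⟩,
        ⟨(c : ℕ) - k - 1, by omega⟩, ?_, ?_, ?_, ?_⟩ <;> rw [Fin.lt_def]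
      · simp; omega
      · simp; omega
      · have e1 := vR a ha; have e2 := vR c hcc; rw [e1] at h1'; rw [e2] at h1'; exact h1'
      · have e1 := vR c hcc; have e2 := vR b hb; rw [e1] at h2'; rw [e2] at h2'; exact h2'
end GlueAvoids

section Decomp
variable {n : ℕ} (w : Perm (Fin (n + 1)))

/-- position of the maximal value `n` -/
def maxPos : Fin (n + 1) := w.symm (Fin.last n)

lemma w_maxPos : w (maxPos w) = Fin.last n := w.apply_symm_apply _

/-- left entries dominate right entries -/
lemma left_gt_right (hw : Avoids132 w) {i j : Fin (n + 1)} (hi : i < maxPos w) (hj : maxPos w < j) :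
    w j < w i := by
  by_contra hcon
  push_neg at hcon
  have hne : w i ≠ w j := fun h => absurd (w.injective h) (by intro h'; subst h'; exact absurd hi (lt_asymm hj))
  have hlt : w i < w j := lt_of_le_of_ne hcon hne
  have hjn : w j < Fin.last n := by
    refine lt_of_le_of_ne (Fin.le_last _) fun h => ?_
    have : j = maxPos w := w.injective (h.trans (w_maxPos w).symm)
    subst this; exact lt_irrefl _ hj
  apply hw
  rw [contains132_iff]
  exact ⟨i, maxPos w, j, hi, hj, hlt, by rw [w_maxPos]; exact hjn⟩

lemma left_ge (hw : Avoids132 w) {i : Fin (n + 1)} (hi : i < maxPos w) :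
    n - (maxPos w : ℕ) ≤ (w i : ℕ) := by
  classical
  set K := maxPos w
  have hS : (Finset.Ioi K).image (fun j : Fin (n + 1) => (w j : ℕ)) ⊆
      Finset.range (w i : ℕ) := by
    intro x hx
    simp only [Finset.mem_image, Finset.mem_Ioi] at hx
    obtain ⟨j, hj, rfl⟩ := hx
    exact Finset.mem_range.mpr (left_gt_right w hw hi hj)
  have hcard : ((Finset.Ioi K).image (fun j : Fin (n + 1) => (w j : ℕ))).card
      = n - (K : ℕ) := by
    rw [Finset.card_image_of_injective _
      (fun x y hxy => w.injective (Fin.ext hxy))]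
    simp [Fin.card_Ioi]
  have := Finset.card_le_card hS
  rw [hcard, Finset.card_range] at this
  omega

lemma right_lt (hw : Avoids132 w) {j : Fin (n + 1)} (hj : maxPos w < j) :
    (w j : ℕ) < n - (maxPos w : ℕ) := by
  classical
  set K := maxPos w
  have hS : (Finset.Iic K).image (fun i : Fin (n + 1) => (w i : ℕ)) ⊆
      Finset.Ioc (w j : ℕ) n := by
    intro x hx
    simp only [Finset.mem_image, Finset.mem_Iic] at hx
    obtain ⟨i, hi, rfl⟩ := hx
    rcases lt_or_eq_of_le hi with hi' | hi'
    · exact Finset.mem_Ioc.mpr ⟨left_gt_right w hw hi' hj, by have := (w i).isLt; omega⟩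
    · have hv : (w i : ℕ) = n := by rw [hi', w_maxPos w]; rfl
      refine Finset.mem_Ioc.mpr ⟨?_, by omega⟩
      have hjn : (w j : ℕ) < n + 1 := (w j).isLt
      have hne : w j ≠ w i := fun h => by
        have h3 := w.injective h
        rw [h3, hi'] at hj
        exact lt_irrefl _ hj
      have h2 : (w j : ℕ) ≠ (w i : ℕ) := fun h => hne (Fin.ext h)
      omega
  have hcard : ((Finset.Iic K).image (fun i : Fin (n + 1) => (w i : ℕ))).card
      = (K : ℕ) + 1 := by
    rw [Finset.card_image_of_injective _
      (fun x y hxy => w.injective (Fin.ext hxy))]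
    simp [Fin.card_Iic]
  have := Finset.card_le_card hS
  rw [hcard, Nat.card_Ioc] at this
  have := (w j).isLt
  have hK := K.isLt
  omega

end Decomp

section Extract
variable {n : ℕ} (w : Perm (Fin (n + 1))) (hw : Avoids132 w)

lemma left_val_lt {i : Fin (n + 1)} (hi : i < maxPos w) : (w i : ℕ) < n := by
  have h1 : (w i : ℕ) < n + 1 := (w i).isLt
  rcases lt_or_eq_of_le (Nat.lt_succ_iff.mp h1) with h | h
  · exact h
  · exfalso
    have : w i = Fin.last n := Fin.ext h
    have : i = maxPos w := w.injective (this.trans (w_maxPos w).symm)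
    rw [this] at hi; exact lt_irrefl _ hi

def uFun (hw : Avoids132 w) (i : Fin (maxPos w : ℕ)) : Fin (maxPos w : ℕ) :=
  ⟨(w ⟨(i : ℕ), by have := (maxPos w).isLt; have := i.isLt; omega⟩ : ℕ) - (n - (maxPos w : ℕ)),
    by
      have hK := (maxPos w).isLt
      have hi : (⟨(i : ℕ), by have := i.isLt; omega⟩ : Fin (n + 1)) < maxPos w := by
        rw [Fin.lt_def]; exact i.isLt
      have h1 := left_ge w hw hi
      have h2 := left_val_lt w hi
      omega⟩

lemma uFun_inj : Function.Injective (uFun w hw) := by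
  intro i j hij
  have hK := (maxPos w).isLt
  have hi : (⟨(i : ℕ), by have := i.isLt; omega⟩ : Fin (n + 1)) < maxPos w := by
    rw [Fin.lt_def]; exact i.isLt
  have hj : (⟨(j : ℕ), by have := j.isLt; omega⟩ : Fin (n + 1)) < maxPos w := by
    rw [Fin.lt_def]; exact j.isLt
  have g1 := left_ge w hw hi
  have g2 := left_ge w hw hj
  have hval := congrArg Fin.val hij
  simp only [uFun] at hval
  have : (w ⟨(i : ℕ), by have := i.isLt; omega⟩ : ℕ)
      = (w ⟨(j : ℕ), by have := j.isLt; omega⟩ : ℕ) := by omega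
  have := w.injective (Fin.ext this)
  have := congrArg Fin.val this
  simp at this
  exact Fin.ext this

noncomputable def uOf : Perm (Fin (maxPos w : ℕ)) :=
  Equiv.ofBijective _ (Finite.injective_iff_bijective.mp (uFun_inj w hw))

def vFun (hw : Avoids132 w) (j : Fin (n - (maxPos w : ℕ))) : Fin (n - (maxPos w : ℕ)) :=
  ⟨(w ⟨(maxPos w : ℕ) + 1 + (j : ℕ), by have := j.isLt; omega⟩ : ℕ),
    by
      refine right_lt w hw ?_
      rw [Fin.lt_def]
      show (maxPos w : ℕ) < (maxPos w : ℕ) + 1 + (j : ℕ)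
      omega⟩

lemma vFun_inj : Function.Injective (vFun w hw) := by
  intro i j hij
  have hval := congrArg Fin.val hij
  simp only [vFun] at hval
  have := w.injective (Fin.ext hval)
  have := congrArg Fin.val this
  simp at this
  exact Fin.ext (by omega)

noncomputable def vOf : Perm (Fin (n - (maxPos w : ℕ))) :=
  Equiv.ofBijective _ (Finite.injective_iff_bijective.mp (vFun_inj w hw))

lemma uOf_avoids : Avoids132 (uOf w hw) := by
  intro hc
  rw [contains132_iff] at hc
  obtain ⟨a, b, c, hab, hbc, h1, h2⟩ := hc
  have hK := (maxPos w).isLt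
  apply hw
  rw [contains132_iff]
  have lift : ∀ x : Fin (maxPos w : ℕ),
      (⟨(x : ℕ), by have := x.isLt; omega⟩ : Fin (n + 1)) < maxPos w := fun x => by
    rw [Fin.lt_def]; exact x.isLt
  refine ⟨⟨(a : ℕ), by have := a.isLt; omega⟩, ⟨(b : ℕ), by have := b.isLt; omega⟩,
    ⟨(c : ℕ), by have := c.isLt; omega⟩, ?_, ?_, ?_, ?_⟩
  · rw [Fin.lt_def]; exact hab
  · rw [Fin.lt_def]; exact hbc
  · rw [Fin.lt_def]
    have e1 : ((uOf w hw) a : ℕ)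
        = (w ⟨(a : ℕ), by have := a.isLt; omega⟩ : ℕ) - (n - (maxPos w : ℕ)) := rfl
    have e2 : ((uOf w hw) c : ℕ)
        = (w ⟨(c : ℕ), by have := c.isLt; omega⟩ : ℕ) - (n - (maxPos w : ℕ)) := rfl
    have g1 := left_ge w hw (lift a)
    have g2 := left_ge w hw (lift c)
    have h1' : ((uOf w hw) a : ℕ) < ((uOf w hw) c : ℕ) := h1
    omega
  · rw [Fin.lt_def]
    have e1 : ((uOf w hw) c : ℕ)
        = (w ⟨(c : ℕ), by have := c.isLt; omega⟩ : ℕ) - (n - (maxPos w : ℕ)) := rfl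
    have e2 : ((uOf w hw) b : ℕ)
        = (w ⟨(b : ℕ), by have := b.isLt; omega⟩ : ℕ) - (n - (maxPos w : ℕ)) := rfl
    have g1 := left_ge w hw (lift c)
    have g2 := left_ge w hw (lift b)
    have h2' : ((uOf w hw) c : ℕ) < ((uOf w hw) b : ℕ) := h2
    omega

lemma vOf_avoids : Avoids132 (vOf w hw) := by
  intro hc
  rw [contains132_iff] at hc
  obtain ⟨a, b, c, hab, hbc, h1, h2⟩ := hc
  have hK := (maxPos w).isLt
  apply hw
  rw [contains132_iff]
  refine ⟨⟨(maxPos w : ℕ) + 1 + (a : ℕ), by have := a.isLt; omega⟩,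
    ⟨(maxPos w : ℕ) + 1 + (b : ℕ), by have := b.isLt; omega⟩,
    ⟨(maxPos w : ℕ) + 1 + (c : ℕ), by have := c.isLt; omega⟩, ?_, ?_, ?_, ?_⟩
  · rw [Fin.lt_def]; have : (a : ℕ) < b := hab; simp; omega
  · rw [Fin.lt_def]; have : (b : ℕ) < c := hbc; simp; omega
  · rw [Fin.lt_def]
    have h1' : ((vOf w hw) a : ℕ) < ((vOf w hw) c : ℕ) := h1
    exact h1'
  · rw [Fin.lt_def]
    have h2' : ((vOf w hw) c : ℕ) < ((vOf w hw) b : ℕ) := h2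
    exact h2'

lemma glue_reconstruct :
    glue (maxPos w : ℕ) (by have := (maxPos w).isLt; omega) (uOf w hw) (vOf w hw) = w := by
  have hK := (maxPos w).isLt
  apply Equiv.ext
  intro i
  rw [glue_apply]
  apply Fin.ext
  rcases lt_trichotomy (i : ℕ) ((maxPos w : ℕ)) with h | h | h
  · rw [glueFun_left _ _ _ _ i h]
    have hi : i < maxPos w := h
    have e : ((uOf w hw) ⟨(i : ℕ), h⟩ : ℕ)
        = (w ⟨(i : ℕ), by omega⟩ : ℕ) - (n - (maxPos w : ℕ)) := rfl
    have g1 := left_ge w hw hi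
    have hii : (⟨(i : ℕ), by omega⟩ : Fin (n + 1)) = i := Fin.ext rfl
    rw [hii] at e
    simp only [e]
    omega
  · rw [glueFun_mid _ _ _ _ i h]
    have : i = maxPos w := Fin.ext h
    rw [this, w_maxPos w]
    rfl
  · rw [glueFun_right _ _ _ _ i h]
    have e : ((vOf w hw) ⟨(i : ℕ) - (maxPos w : ℕ) - 1, by have := i.isLt; omega⟩ : ℕ)
        = (w ⟨(maxPos w : ℕ) + 1 + ((i : ℕ) - (maxPos w : ℕ) - 1), by have := i.isLt; omega⟩ : ℕ) := rfl
    have hii : (⟨(maxPos w : ℕ) + 1 + ((i : ℕ) - (maxPos w : ℕ) - 1), by have := i.isLt; omega⟩ : Fin (n + 1)) = i :=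
      Fin.ext (by simp; omega)
    rw [hii] at e
    exact e

end Extract

section Bij
variable (n : ℕ)

noncomputable def G :
    (Σ k : Fin (n + 1), {u : Perm (Fin (k : ℕ)) // Avoids132 u} ×
      {v : Perm (Fin (n - (k : ℕ))) // Avoids132 v}) →
      {w : Perm (Fin (n + 1)) // Avoids132 w} :=
  fun x => ⟨glue (x.1 : ℕ) (by have := x.1.isLt; omega) x.2.1.1 x.2.2.1,
    glue_avoids _ _ _ _ x.2.1.2 x.2.2.2⟩

set_option maxHeartbeats 1000000 in
lemma G_inj : Function.Injective (G n) := by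
  rintro ⟨k, ⟨u, hu⟩, ⟨v, hv⟩⟩ ⟨k', ⟨u', hu'⟩, ⟨v', hv'⟩⟩ h
  have hk1 : (k : ℕ) ≤ n := by have := k.isLt; omega
  have hk1' : (k' : ℕ) ≤ n := by have := k'.isLt; omega
  have hg : glue (k : ℕ) hk1 u v = glue (k' : ℕ) hk1' u' v' := by
    have := congrArg Subtype.val h
    exact this
  -- k = k'
  have hkk : k = k' := by
    have e1 : glue (k : ℕ) hk1 u v ⟨(k : ℕ), by omega⟩ = ⟨n, by omega⟩ := by
      rw [glue_apply, glueFun_mid _ _ _ _ _ rfl]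
    have e2 : glue (k' : ℕ) hk1' u' v' ⟨(k' : ℕ), by omega⟩ = ⟨n, by omega⟩ := by
      rw [glue_apply, glueFun_mid _ _ _ _ _ rfl]
    rw [← hg] at e2
    have := (glue (k : ℕ) hk1 u v).injective (e1.trans e2.symm)
    exact Fin.ext (congrArg Fin.val this)
  subst hkk
  have hu' : u = u' := by
    apply Equiv.ext
    intro i
    have hi : ((⟨(i : ℕ), by have := i.isLt; omega⟩ : Fin (n + 1)) : ℕ) < (k : ℕ) := i.isLt
    have e1 := glueFun_left (k : ℕ) hk1 u v ⟨(i : ℕ), by have := i.isLt; omega⟩ hi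
    have e2 := glueFun_left (k : ℕ) hk1' u' v' ⟨(i : ℕ), by have := i.isLt; omega⟩ hi
    have e3 : glueFun (k : ℕ) hk1 u v ⟨(i : ℕ), by have := i.isLt; omega⟩
        = glueFun (k : ℕ) hk1' u' v' ⟨(i : ℕ), by have := i.isLt; omega⟩ :=
      DFunLike.congr_fun hg _
    have e4 := congrArg Fin.val ((e1.symm.trans e3).trans e2)
    simp only [Fin.val_mk] at e4
    have e5 : (u ⟨(i : ℕ), hi⟩ : ℕ) = (u' ⟨(i : ℕ), hi⟩ : ℕ) := by omega
    have hieq : (⟨(i : ℕ), hi⟩ : Fin (k : ℕ)) = i := Fin.ext rfl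
    rw [hieq] at e5
    exact Fin.ext e5
  have hv' : v = v' := by
    apply Equiv.ext
    intro j
    have hj : (k : ℕ) < ((⟨(k : ℕ) + 1 + (j : ℕ), by have := j.isLt; omega⟩ : Fin (n + 1)) : ℕ) := by
      simp only [Fin.val_mk]; omega
    have e1 := glueFun_right (k : ℕ) hk1 u v ⟨(k : ℕ) + 1 + (j : ℕ), by have := j.isLt; omega⟩ hj
    have e2 := glueFun_right (k : ℕ) hk1' u' v' ⟨(k : ℕ) + 1 + (j : ℕ), by have := j.isLt; omega⟩ hj
    have e3 : glueFun (k : ℕ) hk1 u v ⟨(k : ℕ) + 1 + (j : ℕ), by have := j.isLt; omega⟩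
        = glueFun (k : ℕ) hk1' u' v' ⟨(k : ℕ) + 1 + (j : ℕ), by have := j.isLt; omega⟩ :=
      DFunLike.congr_fun hg _
    have e4 := congrArg Fin.val ((e1.symm.trans e3).trans e2)
    simp only [Fin.val_mk] at e4
    have hjeq : (⟨(k : ℕ) + 1 + (j : ℕ) - (k : ℕ) - 1, by have := j.isLt; omega⟩ : Fin (n - (k : ℕ)))
        = j := Fin.ext (by simp only [Fin.val_mk]; omega)
    rw [hjeq] at e4
    exact Fin.ext e4
  subst hu'
  subst hv'
  rfl

lemma G_surj : Function.Surjective (G n) := by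
  rintro ⟨w, hw⟩
  refine ⟨⟨maxPos w, ⟨uOf w hw, uOf_avoids w hw⟩, ⟨vOf w hw, vOf_avoids w hw⟩⟩, ?_⟩
  apply Subtype.ext
  exact glue_reconstruct w hw

end Bij

lemma natCard_sigma {ι : Type*} [Fintype ι] (α : ι → Type*) [∀ i, Finite (α i)] :
    Nat.card ((i : ι) × α i) = ∑ i, Nat.card (α i) := by
  classical
  letI : ∀ i, Fintype (α i) := fun i => Fintype.ofFinite _
  simp [Nat.card_eq_fintype_card]


/-- the Catalan recurrence for `s n = s_n(132)`. -/
theorem stmt1 :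
    Nat.card {w : Equiv.Perm (Fin 0) // Avoids132 w} = 1 ∧
    ∀ n : ℕ,
      Nat.card {w : Equiv.Perm (Fin (n + 1)) // Avoids132 w} =
        ∑ k ∈ Finset.range (n + 1),
          Nat.card {w : Equiv.Perm (Fin k) // Avoids132 w} *
            Nat.card {w : Equiv.Perm (Fin (n - k)) // Avoids132 w} := by
  constructor
  · have hall : ∀ w : Perm (Fin 0), Avoids132 w := by
      rintro w ⟨f, -, -⟩
      exact (f 0).elim0
    rw [Nat.card_congr (Equiv.subtypeUnivEquiv hall), Nat.card_eq_fintype_card]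
    simp
  · intro n
    have hbij : Function.Bijective (G n) := ⟨G_inj n, G_surj n⟩
    rw [Nat.card_congr (Equiv.ofBijective (G n) hbij).symm, natCard_sigma]
    rw [← Fin.sum_univ_eq_sum_range (fun m =>
      Nat.card {w : Equiv.Perm (Fin m) // Avoids132 w} *
        Nat.card {w : Equiv.Perm (Fin (n - m)) // Avoids132 w}) (n + 1)]
    exact Finset.sum_congr rfl fun k _ => Nat.card_prod _ _
end

section
/- Let φ: S_n(132) → A_{2n+1}(132) be the bijection with even-indexed entries of φ(w) order-isomorphic to w. Then for any 132-avoiding pattern p, w contains p if and only if φ(w) contains φ(p). Consequently, for any 132-avoiding patterns p_1,...,p_k, φ restricts to a bijection from S_n(132, p_1,...,p_k) to A_{2n+1}(132, φ(p_1),...,φ(p_k)). -/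
open Equiv

private lemma lt_iff_not_lt_of_ne' {α : Type*} [LinearOrder α] {x y : α} (h : x ≠ y) :
    x < y ↔ ¬ y < x :=
  ⟨fun h1 h2 => absurd h1 (lt_asymm h2), fun h1 => (lt_or_gt_of_ne h).resolve_right h1⟩

private lemma contains132_of {M : ℕ} {v : Fin M → Fin M} {a b c : Fin M}
    (hab : a < b) (hbc : b < c) (h1 : v a < v c) (h2 : v c < v b) :
    Contains v pat132 := by
  have hac : v a < v b := h1.trans h2
  refine ⟨![a, b, c], ?_, ?_⟩
  · intro i j hij
    fin_cases i <;> fin_cases j <;> simp_all <;>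
      first
        | exact hab | exact hbc | exact hab.trans hbc
        | exact absurd hij (by decide)
  · intro i j
    fin_cases i <;> fin_cases j <;>
      simp [pat132] <;>
      first
        | exact h1 | exact h2 | exact hac
        | exact le_of_lt h1 | exact le_of_lt h2 | exact le_of_lt hac
        | exact lt_asymm h1 | exact lt_asymm h2 | exact lt_asymm hac

section ZLemmas

variable {m : ℕ} {z : Equiv.Perm (Fin (2 * m + 1))}

private lemma valley_dec (halt : Alternating z) (hav : Avoids132 z)
    {a b : Fin (2 * m + 1)} (hab : a < b) (ha : (a : ℕ) % 2 = 0) (hb : (b : ℕ) % 2 = 0) :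
    z b < z a := by
  have habv : (a : ℕ) < (b : ℕ) := hab
  have hbz := b.isLt
  have hc : (b : ℕ) - 1 < 2 * m + 1 := by omega
  have hdown : z b < z ⟨(b : ℕ) - 1, hc⟩ := by
    have h := (halt ((b : ℕ) - 1) (by omega)).2 (by omega)
    have he : (⟨(b : ℕ) - 1 + 1, by omega⟩ : Fin (2 * m + 1)) = b :=
      Fin.ext (show (b : ℕ) - 1 + 1 = (b : ℕ) by omega)
    rwa [he] at h
  rcases lt_trichotomy (z b) (z a) with h | h | h
  · exact h
  · exact absurd (congrArg Fin.val (z.injective h)) (by omega)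
  · exact absurd (contains132_of (v := fun i => z i) (a := a) (b := ⟨(b : ℕ) - 1, hc⟩) (c := b)
      (show (a : ℕ) < (b : ℕ) - 1 by omega) (show (b : ℕ) - 1 < (b : ℕ) by omega)
      h hdown) hav

private lemma valley_min (halt : Alternating z) (hav : Avoids132 z)
    {a b : Fin (2 * m + 1)} (hab : a < b) (hb : (b : ℕ) % 2 = 0) :
    z b < z a := by
  have habv : (a : ℕ) < (b : ℕ) := hab
  have hbz := b.isLt
  rcases Nat.even_or_odd (a : ℕ) with he | ho
  · exact valley_dec halt hav hab (Nat.even_iff.mp he) hb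
  · have ha1 : (a : ℕ) % 2 = 1 := Nat.odd_iff.mp ho
    have hb1 : (a : ℕ) + 1 < 2 * m + 1 := by omega
    have hup : z ⟨(a : ℕ) + 1, hb1⟩ < z a := by
      have h := (halt (a : ℕ) hb1).2 ha1
      simpa using h
    rcases eq_or_lt_of_le (show (a : ℕ) + 1 ≤ (b : ℕ) by omega) with he2 | hl
    · have he3 : (⟨(a : ℕ) + 1, hb1⟩ : Fin (2 * m + 1)) = b := Fin.ext he2
      rwa [he3] at hup
    · exact (valley_dec halt hav (show ((⟨(a : ℕ) + 1, hb1⟩ : Fin (2 * m + 1))) < b from hl)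
        (by simp; omega) hb).trans hup

private lemma valley_peak {u : Equiv.Perm (Fin m)} (halt : Alternating z) (hav : Avoids132 z)
    (hiso : OrderIsoEven z u) (j : ℕ) (i : Fin m) (hji : j ≤ (i : ℕ)) :
    (z ⟨2 * j, by have := i.isLt; omega⟩ < z ⟨2 * (i : ℕ) + 1, by have := i.isLt; omega⟩ ↔
      ∀ t : Fin m, j ≤ (t : ℕ) → (t : ℕ) ≤ (i : ℕ) → u t ≤ u i) := by
  have him := i.isLt
  constructor
  · intro h t ht1 ht2
    by_contra hcon
    have hui : u i < u t := not_le.mp hcon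
    have htne : (t : ℕ) ≠ (i : ℕ) := by
      intro e
      exact absurd (Fin.ext e ▸ hui) (lt_irrefl _)
    have hz := (hiso i t).mp hui
    exact absurd (contains132_of (v := fun q => z q)
      (a := ⟨2 * j, by omega⟩) (b := ⟨2 * (t : ℕ) + 1, by have := t.isLt; omega⟩)
      (c := ⟨2 * (i : ℕ) + 1, by omega⟩)
      (show 2 * j < 2 * (t : ℕ) + 1 by omega)
      (show 2 * (t : ℕ) + 1 < 2 * (i : ℕ) + 1 by omega)
      h hz) hav
  · intro h
    have hm0 : j < m := by omega
    have h1 : z ⟨2 * j, by omega⟩ < z ⟨2 * j + 1, by omega⟩ := by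
      have := (halt (2 * j) (by omega)).1 (by omega)
      exact this
    rcases eq_or_lt_of_le hji with he | hl
    · have he2 : (⟨2 * j + 1, by omega⟩ : Fin (2 * m + 1)) = ⟨2 * (i : ℕ) + 1, by omega⟩ :=
        Fin.ext (show 2 * j + 1 = 2 * (i : ℕ) + 1 by omega)
      rwa [he2] at h1
    · have ht0 : u ⟨j, hm0⟩ ≤ u i := h ⟨j, hm0⟩ (le_refl _) (le_of_lt hl)
      have hne : (⟨j, hm0⟩ : Fin m) ≠ i :=
        Fin.ne_of_val_ne (show j ≠ (i : ℕ) by omega)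
      have hlt : u ⟨j, hm0⟩ < u i := lt_of_le_of_ne ht0 (fun e => hne (u.injective e))
      have h2 := (hiso ⟨j, hm0⟩ i).mp hlt
      exact h1.trans h2

end ZLemmas

section FF

variable {n k : ℕ}

private def ggF (g : Fin k → Fin n) : ℕ → ℕ :=
  fun i => if h : i < k then (g ⟨i, h⟩ : ℕ) else n

private lemma ggF_eq (g : Fin k → Fin n) {i : ℕ} (hi : i < k) :
    ggF g i = (g ⟨i, hi⟩ : ℕ) := dif_pos hi

private lemma ggF_lt (g : Fin k → Fin n) {i : ℕ} (hi : i < k) : ggF g i < n := by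
  rw [ggF_eq g hi]; exact (g ⟨i, hi⟩).isLt

private lemma ggF_strict {g : Fin k → Fin n} (hg : StrictMono g) {i j : ℕ}
    (hij : i < j) (hj : j < k) : ggF g i < ggF g j := by
  rw [ggF_eq g (hij.trans hj), ggF_eq g hj]
  exact hg (show (⟨i, hij.trans hj⟩ : Fin k) < ⟨j, hj⟩ from hij)

private lemma ggF_mono {g : Fin k → Fin n} (hg : StrictMono g) {i j : ℕ}
    (hij : i ≤ j) (hj : j < k) : ggF g i ≤ ggF g j := by
  rcases eq_or_lt_of_le hij with rfl | h
  · exact le_refl _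
  · exact le_of_lt (ggF_strict hg h hj)

private def ffF (g : Fin k → Fin n) : ℕ → ℕ := fun q =>
  if q % 2 = 1 then 2 * ggF g (q / 2) + 1
  else if q / 2 < k then 2 * ggF g (q / 2) else 2 * (ggF g (k - 1) + 1)

private lemma ffF_odd (g : Fin k → Fin n) {q : ℕ} (hq : q % 2 = 1) :
    ffF g q = 2 * ggF g (q / 2) + 1 := if_pos hq

private lemma ffF_even (g : Fin k → Fin n) {q : ℕ} (hq : q % 2 = 0) (h2 : q / 2 < k) :
    ffF g q = 2 * ggF g (q / 2) := by
  unfold ffF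
  rw [if_neg (by omega), if_pos h2]

private lemma ffF_last (g : Fin k → Fin n) (hk : k ≠ 0) :
    ffF g (2 * k) = 2 * (ggF g (k - 1) + 1) := by
  unfold ffF
  rw [if_neg (by omega), if_neg (by omega)]

private lemma ffF_bound {g : Fin k → Fin n} (hg : StrictMono g) (hk : k ≠ 0) {q : ℕ}
    (hq : q ≤ 2 * k) : ffF g q < 2 * n + 1 := by
  rcases Nat.even_or_odd q with he | ho
  · have he' : q % 2 = 0 := Nat.even_iff.mp he
    rcases Nat.lt_or_ge (q / 2) k with h2 | h2
    · rw [ffF_even g he' h2]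
      have := ggF_lt g h2
      omega
    · have hq2 : q = 2 * k := by omega
      rw [hq2, ffF_last g hk]
      have := ggF_lt g (show k - 1 < k by omega)
      omega
  · have ho' : q % 2 = 1 := Nat.odd_iff.mp ho
    rw [ffF_odd g ho']
    have := ggF_lt g (show q / 2 < k by omega)
    omega

private lemma ffF_step {g : Fin k → Fin n} (hg : StrictMono g) (hk : k ≠ 0) {q : ℕ}
    (hq : q + 1 ≤ 2 * k) : ffF g q < ffF g (q + 1) := by
  rcases Nat.even_or_odd q with he | ho
  · have he' : q % 2 = 0 := Nat.even_iff.mp he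
    have h2 : q / 2 < k := by omega
    have e1 : (q + 1) / 2 = q / 2 := by omega
    rw [ffF_even g he' h2, ffF_odd g (by omega), e1]
    omega
  · have ho' : q % 2 = 1 := Nat.odd_iff.mp ho
    have e1 : (q + 1) / 2 = q / 2 + 1 := by omega
    rw [ffF_odd g ho']
    rcases Nat.lt_or_ge ((q + 1) / 2) k with h2 | h2
    · rw [ffF_even g (by omega) h2, e1]
      have := ggF_strict hg (show q / 2 < q / 2 + 1 by omega) (e1 ▸ h2)
      omega
    · have hq2 : q + 1 = 2 * k := by omega
      rw [hq2, ffF_last g hk]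
      have e2 : q / 2 = k - 1 := by omega
      rw [e2]
      omega

private lemma ffF_mono {g : Fin k → Fin n} (hg : StrictMono g) (hk : k ≠ 0) {a b : ℕ}
    (hab : a < b) (hb : b ≤ 2 * k) : ffF g a < ffF g b := by
  induction b with
  | zero => omega
  | succ b ih =>
    rcases eq_or_lt_of_le (Nat.le_of_lt_succ hab) with rfl | h
    · exact ffF_step hg hk hb
    · exact (ih h (by omega)).trans (ffF_step hg hk hb)

private lemma ffF_valley_mod {g : Fin k → Fin n} (hk : k ≠ 0) {j : ℕ} (hj : j ≤ k) :
    ffF g (2 * j) % 2 = 0 := by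
  rcases eq_or_lt_of_le hj with rfl | h
  · rw [ffF_last g hk]; omega
  · rw [ffF_even g (by omega) (by omega)]; omega

end FF

/-- `w` contains a 132-avoiding pattern `p` iff `φ(w)` contains
`φ(p)`; consequently `φ` restricts to a bijection from
`S_n(132, p₁, …, p_k)` to `A_{2n+1}(132, φ(p₁), …, φ(p_k))`. -/
theorem stmt13 (n : ℕ) (w : Equiv.Perm (Fin n)) (hw : Avoids132 w)
    (φw : Equiv.Perm (Fin (2 * n + 1)))
    (hφ : Alternating φw ∧ Avoids132 φw ∧ OrderIsoEven φw w) :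
    (∀ k : ℕ, ∀ p : Equiv.Perm (Fin k), Avoids132 p →
      ∀ φp : Equiv.Perm (Fin (2 * k + 1)),
        Alternating φp ∧ Avoids132 φp ∧ OrderIsoEven φp p →
        (ContainsP w p ↔ ContainsP φw φp)) ∧
    (∀ (ι : Type) (ms : ι → ℕ) (ps : (i : ι) → Equiv.Perm (Fin (ms i)))
        (_ : ∀ i, Avoids132 (ps i))
        (φps : (i : ι) → Equiv.Perm (Fin (2 * ms i + 1)))
        (_ : ∀ i, Alternating (φps i) ∧ Avoids132 (φps i) ∧
              OrderIsoEven (φps i) (ps i)),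
      ((∀ i, ¬ ContainsP w (ps i)) ↔ (∀ i, ¬ ContainsP φw (φps i)))) := by
  obtain ⟨hwalt, hwav, hwiso⟩ := hφ
  have key : ∀ k : ℕ, ∀ p : Equiv.Perm (Fin k), Avoids132 p →
      ∀ φp : Equiv.Perm (Fin (2 * k + 1)),
        Alternating φp ∧ Avoids132 φp ∧ OrderIsoEven φp p →
        (ContainsP w p ↔ ContainsP φw φp) := by
    intro k p _ φp hφp
    obtain ⟨hpalt, hpav, hpiso⟩ := hφp
    constructor
    · -- forward
      rintro ⟨g, hgm, hgo⟩
      by_cases hk : k = 0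
      · subst hk
        refine ⟨fun _ => ⟨0, by omega⟩, ?_, ?_⟩
        · intro a b hab
          exact absurd (show (a : ℕ) < (b : ℕ) from hab)
            (by have := a.isLt; have := b.isLt; omega)
        · intro a b
          have hab : a = b := Fin.ext (by have := a.isLt; have := b.isLt; omega)
          rw [hab]
          simp
      · have hB : ∀ q : ℕ, q ≤ 2 * k → ffF g q < 2 * n + 1 :=
          fun q hq => ffF_bound hgm hk hq
        have hgo' : ∀ i i' : Fin k, p i < p i' ↔
            w ⟨ggF g (i : ℕ), ggF_lt g i.isLt⟩ < w ⟨ggF g (i' : ℕ), ggF_lt g i'.isLt⟩ := by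
          intro i i'
          have e1 : (⟨ggF g (i : ℕ), ggF_lt g i.isLt⟩ : Fin n) = g i :=
            Fin.ext (show ggF g (i : ℕ) = ((g i : Fin n) : ℕ) by rw [ggF_eq g i.isLt])
          have e2 : (⟨ggF g (i' : ℕ), ggF_lt g i'.isLt⟩ : Fin n) = g i' :=
            Fin.ext (show ggF g (i' : ℕ) = ((g i' : Fin n) : ℕ) by rw [ggF_eq g i'.isLt])
          rw [e1, e2]
          exact hgo i i'
        -- master: valley vs peak
        have hvp : ∀ (j : ℕ) (i : Fin k) (hj : j ≤ k),
            ((φp ⟨2 * j, by omega⟩ : Fin (2 * k + 1)) <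
                φp ⟨2 * (i : ℕ) + 1, by have := i.isLt; omega⟩ ↔
              (φw ⟨ffF g (2 * j), hB _ (by omega)⟩ : Fin (2 * n + 1)) <
                φw ⟨ffF g (2 * (i : ℕ) + 1), hB _ (by have := i.isLt; omega)⟩) := by
          intro j i hj
          have him := i.isLt
          rcases Nat.lt_or_ge (i : ℕ) j with hij | hij
          · -- i < j : both true
            have hL := valley_min hpalt hpav
              (a := ⟨2 * (i : ℕ) + 1, by omega⟩) (b := ⟨2 * j, by omega⟩)
              (show 2 * (i : ℕ) + 1 < 2 * j by omega) (show (2 * j) % 2 = 0 by omega)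
            have hR := valley_min hwalt hwav
              (a := ⟨ffF g (2 * (i : ℕ) + 1), hB _ (by omega)⟩)
              (b := ⟨ffF g (2 * j), hB _ (by omega)⟩)
              (show ffF g (2 * (i : ℕ) + 1) < ffF g (2 * j) from
                ffF_mono hgm hk (by omega) (by omega))
              (ffF_valley_mod hk hj)
            exact iff_of_true hL hR
          · -- j ≤ i
            have hjk : j < k := lt_of_le_of_lt hij i.isLt
            have ej : ffF g (2 * j) = 2 * ggF g j := by
              rw [ffF_even g (by omega) (by omega : (2 * j) / 2 < k)]
              have e0 : (2 * j) / 2 = j := by omega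
              rw [e0]
            have ei : ffF g (2 * (i : ℕ) + 1) = 2 * ggF g (i : ℕ) + 1 := by
              rw [ffF_odd g (by omega)]
              have e0 : (2 * (i : ℕ) + 1) / 2 = (i : ℕ) := by omega
              rw [e0]
            have eQj : (⟨ffF g (2 * j), hB _ (by omega)⟩ : Fin (2 * n + 1)) =
                ⟨2 * ggF g j, by have := ggF_lt g hjk; omega⟩ := Fin.ext ej
            have eQi : (⟨ffF g (2 * (i : ℕ) + 1), hB _ (by omega)⟩ : Fin (2 * n + 1)) =
                ⟨2 * ggF g (i : ℕ) + 1, by have := ggF_lt g i.isLt; omega⟩ := Fin.ext ei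
            rw [eQj, eQi]
            have hLiff := valley_peak hpalt hpav hpiso j i hij
            have hRiff := valley_peak hwalt hwav hwiso (ggF g j)
              ⟨ggF g (i : ℕ), ggF_lt g i.isLt⟩ (ggF_mono hgm hij i.isLt)
            have hPiff : (∀ t : Fin k, j ≤ (t : ℕ) → (t : ℕ) ≤ (i : ℕ) → p t ≤ p i) ↔
                (∀ r : Fin n, ggF g j ≤ (r : ℕ) → (r : ℕ) ≤ ggF g (i : ℕ) →
                  w r ≤ w ⟨ggF g (i : ℕ), ggF_lt g i.isLt⟩) := by
              constructor
              · intro hP r hr1 hr2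
                by_contra hcon
                have hwlt : w ⟨ggF g (i : ℕ), ggF_lt g i.isLt⟩ < w r := not_le.mp hcon
                have hpj : p ⟨j, hjk⟩ ≤ p i := hP ⟨j, hjk⟩ (le_refl _) hij
                have hwj : w ⟨ggF g j, ggF_lt g hjk⟩ ≤ w ⟨ggF g (i : ℕ), ggF_lt g i.isLt⟩ := by
                  by_contra hc2
                  exact absurd ((hgo' i ⟨j, hjk⟩).mpr (not_le.mp hc2)) (not_lt.mpr hpj)
                have hrne : (r : ℕ) ≠ ggF g (i : ℕ) := by
                  intro e
                  have he : r = ⟨ggF g (i : ℕ), ggF_lt g i.isLt⟩ := Fin.ext e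
                  rw [he] at hwlt
                  exact lt_irrefl _ hwlt
                have hrlt : (r : ℕ) < ggF g (i : ℕ) := lt_of_le_of_ne hr2 hrne
                rcases eq_or_lt_of_le hr1 with e5 | h5
                · have he : r = ⟨ggF g j, ggF_lt g hjk⟩ := Fin.ext e5.symm
                  rw [he] at hwlt
                  exact absurd hwlt (not_lt.mpr hwj)
                · have hwjs : w ⟨ggF g j, ggF_lt g hjk⟩ < w ⟨ggF g (i : ℕ), ggF_lt g i.isLt⟩ :=
                    lt_of_le_of_ne hwj (fun e => by
                      have h6 : ggF g j = ggF g (i : ℕ) := congrArg Fin.val (w.injective e)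
                      omega)
                  exact absurd (contains132_of (v := fun q => w q)
                    (a := ⟨ggF g j, ggF_lt g hjk⟩) (b := r)
                    (c := ⟨ggF g (i : ℕ), ggF_lt g i.isLt⟩)
                    h5 hrlt hwjs hwlt) hw
              · intro hP t ht1 ht2
                by_contra hc
                have h2 : w ⟨ggF g (i : ℕ), ggF_lt g i.isLt⟩ <
                    w ⟨ggF g (t : ℕ), ggF_lt g t.isLt⟩ := (hgo' i t).mp (not_le.mp hc)
                have h4 : w ⟨ggF g (t : ℕ), ggF_lt g t.isLt⟩ ≤
                    w ⟨ggF g (i : ℕ), ggF_lt g i.isLt⟩ :=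
                  hP ⟨ggF g (t : ℕ), ggF_lt g t.isLt⟩ (ggF_mono hgm ht1 t.isLt)
                    (ggF_mono hgm ht2 i.isLt)
                exact absurd h2 (not_lt.mpr h4)
            exact hLiff.trans (hPiff.trans hRiff.symm)
        -- master: peak vs peak
        have hpp : ∀ i i' : Fin k,
            ((φp ⟨2 * (i : ℕ) + 1, by have := i.isLt; omega⟩ : Fin (2 * k + 1)) <
                φp ⟨2 * (i' : ℕ) + 1, by have := i'.isLt; omega⟩ ↔
              (φw ⟨ffF g (2 * (i : ℕ) + 1), hB _ (by have := i.isLt; omega)⟩ : Fin (2 * n + 1)) <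
                φw ⟨ffF g (2 * (i' : ℕ) + 1), hB _ (by have := i'.isLt; omega)⟩) := by
          intro i i'
          have ei : ffF g (2 * (i : ℕ) + 1) = 2 * ggF g (i : ℕ) + 1 := by
            rw [ffF_odd g (by omega)]
            have e0 : (2 * (i : ℕ) + 1) / 2 = (i : ℕ) := by omega
            rw [e0]
          have ei' : ffF g (2 * (i' : ℕ) + 1) = 2 * ggF g (i' : ℕ) + 1 := by
            rw [ffF_odd g (by omega)]
            have e0 : (2 * (i' : ℕ) + 1) / 2 = (i' : ℕ) := by omega
            rw [e0]
          have eQi : (⟨ffF g (2 * (i : ℕ) + 1), hB _ (by have := i.isLt; omega)⟩ :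
              Fin (2 * n + 1)) = ⟨2 * ggF g (i : ℕ) + 1, by have := ggF_lt g i.isLt; omega⟩ :=
            Fin.ext ei
          have eQi' : (⟨ffF g (2 * (i' : ℕ) + 1), hB _ (by have := i'.isLt; omega)⟩ :
              Fin (2 * n + 1)) = ⟨2 * ggF g (i' : ℕ) + 1, by have := ggF_lt g i'.isLt; omega⟩ :=
            Fin.ext ei'
          rw [eQi, eQi']
          exact (hpiso i i').symm.trans ((hgo' i i').trans
            (hwiso ⟨ggF g (i : ℕ), ggF_lt g i.isLt⟩ ⟨ggF g (i' : ℕ), ggF_lt g i'.isLt⟩))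
        -- master: valley vs valley
        have hvv : ∀ (j j' : ℕ) (hj : j ≤ k) (hj' : j' ≤ k),
            ((φp ⟨2 * j, by omega⟩ : Fin (2 * k + 1)) < φp ⟨2 * j', by omega⟩ ↔
              (φw ⟨ffF g (2 * j), hB _ (by omega)⟩ : Fin (2 * n + 1)) <
                φw ⟨ffF g (2 * j'), hB _ (by omega)⟩) := by
          intro j j' hj hj'
          rcases lt_trichotomy j j' with h | h | h
          · refine iff_of_false ?_ ?_
            · exact lt_asymm (valley_dec hpalt hpav
                (a := ⟨2 * j, by omega⟩) (b := ⟨2 * j', by omega⟩)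
                (show 2 * j < 2 * j' by omega) (show (2 * j) % 2 = 0 by omega)
                (show (2 * j') % 2 = 0 by omega))
            · exact lt_asymm (valley_dec hwalt hwav
                (a := ⟨ffF g (2 * j), hB _ (by omega)⟩) (b := ⟨ffF g (2 * j'), hB _ (by omega)⟩)
                (show ffF g (2 * j) < ffF g (2 * j') from ffF_mono hgm hk (by omega) (by omega))
                (ffF_valley_mod hk hj) (ffF_valley_mod hk hj'))
          · subst h
            exact iff_of_false (lt_irrefl _) (lt_irrefl _)
          · refine iff_of_true ?_ ?_
            · exact valley_dec hpalt hpav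
                (a := ⟨2 * j', by omega⟩) (b := ⟨2 * j, by omega⟩)
                (show 2 * j' < 2 * j by omega) (show (2 * j') % 2 = 0 by omega)
                (show (2 * j) % 2 = 0 by omega)
            · exact valley_dec hwalt hwav
                (a := ⟨ffF g (2 * j'), hB _ (by omega)⟩) (b := ⟨ffF g (2 * j), hB _ (by omega)⟩)
                (show ffF g (2 * j') < ffF g (2 * j) from ffF_mono hgm hk (by omega) (by omega))
                (ffF_valley_mod hk hj') (ffF_valley_mod hk hj)
        refine ⟨fun q => ⟨ffF g (q : ℕ), hB (q : ℕ) (by have := q.isLt; omega)⟩, ?_, ?_⟩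
        · intro a b hab
          exact ffF_mono hgm hk (show (a : ℕ) < (b : ℕ) from hab) (by have := b.isLt; omega)
        · intro x y
          rcases x with ⟨xv, hxv⟩
          rcases y with ⟨yv, hyv⟩
          obtain ⟨jx, rfl | rfl⟩ : ∃ j, xv = 2 * j ∨ xv = 2 * j + 1 := ⟨xv / 2, by omega⟩ <;>
            obtain ⟨jy, rfl | rfl⟩ : ∃ j, yv = 2 * j ∨ yv = 2 * j + 1 := ⟨yv / 2, by omega⟩
          · exact hvv jx jy (by omega) (by omega)
          · exact hvp jx ⟨jy, by omega⟩ (by omega)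
          · -- odd, even : negate
            have hne1 : (φp ⟨2 * jx + 1, hxv⟩ : Fin (2 * k + 1)) ≠ φp ⟨2 * jy, hyv⟩ := by
              intro e
              have h2 : 2 * jx + 1 = 2 * jy := congrArg Fin.val (φp.injective e)
              omega
            have hne2 : (φw ⟨ffF g (2 * jx + 1), hB _ (by omega)⟩ : Fin (2 * n + 1)) ≠
                φw ⟨ffF g (2 * jy), hB _ (by omega)⟩ := by
              intro e
              have h2 : ffF g (2 * jx + 1) = ffF g (2 * jy) := congrArg Fin.val (φw.injective e)
              rw [ffF_odd g (by omega)] at h2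
              have h3 := ffF_valley_mod (g := g) hk (j := jy) (by omega)
              omega
            rw [lt_iff_not_lt_of_ne' hne1, lt_iff_not_lt_of_ne' hne2]
            exact not_congr (hvp jy ⟨jx, by omega⟩ (by omega))
          · exact hpp ⟨jx, by omega⟩ ⟨jy, by omega⟩
    · -- backward
      rintro ⟨f, hfm, hfo⟩
      by_cases hk : k = 0
      · subst hk
        exact ⟨Fin.elim0, fun a => a.elim0, fun i => i.elim0⟩
      · have hodd : ∀ i : Fin k,
            ((f ⟨2 * (i : ℕ) + 1, by have := i.isLt; omega⟩ : Fin (2 * n + 1)) : ℕ) % 2 = 1 := by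
          intro i
          have him := i.isLt
          by_contra hpar
          have hpar0 : ((f ⟨2 * (i : ℕ) + 1, by omega⟩ : Fin (2 * n + 1)) : ℕ) % 2 = 0 := by
            omega
          have hlt : f ⟨2 * (i : ℕ), by omega⟩ < f ⟨2 * (i : ℕ) + 1, by omega⟩ :=
            hfm (show 2 * (i : ℕ) < 2 * (i : ℕ) + 1 by omega)
          have hup : (φp ⟨2 * (i : ℕ), by omega⟩ : Fin (2 * k + 1)) <
              φp ⟨2 * (i : ℕ) + 1, by omega⟩ := by
            have h := (hpalt (2 * (i : ℕ)) (by omega)).1 (by omega)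
            exact h
          have h2 := (hfo ⟨2 * (i : ℕ), by omega⟩ ⟨2 * (i : ℕ) + 1, by omega⟩).mp hup
          exact absurd h2 (not_lt.mpr (le_of_lt (valley_min hwalt hwav hlt hpar0)))
        obtain ⟨gB, hgB⟩ : ∃ gB : Fin k → Fin n, ∀ i : Fin k,
            2 * ((gB i : Fin n) : ℕ) + 1 =
              ((f ⟨2 * (i : ℕ) + 1, by have := i.isLt; omega⟩ : Fin (2 * n + 1)) : ℕ) := by
          refine ⟨fun i => ⟨((f ⟨2 * (i : ℕ) + 1, by have := i.isLt; omega⟩ :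
              Fin (2 * n + 1)) : ℕ) / 2, ?_⟩, fun i => ?_⟩
          · have h1 := (f ⟨2 * (i : ℕ) + 1, by have := i.isLt; omega⟩).isLt
            have h2 := hodd i
            omega
          · have h1 := (f ⟨2 * (i : ℕ) + 1, by have := i.isLt; omega⟩).isLt
            have h2 := hodd i
            show 2 * (((f ⟨2 * (i : ℕ) + 1, by have := i.isLt; omega⟩ :
              Fin (2 * n + 1)) : ℕ) / 2) + 1 = _
            omega
        refine ⟨gB, ?_, ?_⟩
        · intro a b hab
          have ha' := hgB a
          have hb' := hgB b
          have h1' : ((f ⟨2 * (a : ℕ) + 1, by have := a.isLt; omega⟩ : Fin (2 * n + 1)) : ℕ) <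
              ((f ⟨2 * (b : ℕ) + 1, by have := b.isLt; omega⟩ : Fin (2 * n + 1)) : ℕ) :=
            hfm (show (2 * (a : ℕ) + 1 : ℕ) < 2 * (b : ℕ) + 1 by
              have : (a : ℕ) < (b : ℕ) := hab; omega)
          show ((gB a : Fin n) : ℕ) < ((gB b : Fin n) : ℕ)
          omega
        · intro i j
          have e_i : (⟨2 * ((gB i : Fin n) : ℕ) + 1, by have := (gB i).isLt; omega⟩ :
              Fin (2 * n + 1)) = f ⟨2 * (i : ℕ) + 1, by have := i.isLt; omega⟩ :=
            Fin.ext (hgB i)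
          have e_j : (⟨2 * ((gB j : Fin n) : ℕ) + 1, by have := (gB j).isLt; omega⟩ :
              Fin (2 * n + 1)) = f ⟨2 * (j : ℕ) + 1, by have := j.isLt; omega⟩ :=
            Fin.ext (hgB j)
          have h4 := hwiso (gB i) (gB j)
          rw [e_i, e_j] at h4
          exact (hpiso i j).trans
            ((hfo ⟨2 * (i : ℕ) + 1, by have := i.isLt; omega⟩
              ⟨2 * (j : ℕ) + 1, by have := j.isLt; omega⟩).trans h4.symm)
  refine ⟨key, fun ι ms ps hpsav φps hφps => ⟨fun H i hc => H i ?_, fun H i hc => H i ?_⟩⟩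
  · exact (key (ms i) (ps i) (hpsav i) (φps i) (hφps i)).mpr hc
  · exact (key (ms i) (ps i) (hpsav i) (φps i) (hφps i)).mp hc
end
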